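/- Let ν > −1, let N be a nonnegative integer, and let n ≥ 1 be an integer. Define T^ν_{N,n}(x) = x^{N + 1/2} · (N! n! / (N + n)!) · P_n^{(N,ν)}(1 − 2x²). Then for all x > 0: x² · T^ν_{N,n}(x) = a_n T^ν_{N,n+1}(x) + b_n T^ν_{N,n}(x) + c_n T^ν_{N,n−1}(x), where a_n = −(n + N + 1)(n + N + ν + 1) / ((2n + N + ν + 1)(2n + N + ν + 2)), b_n = (1/2) ( 1 + (N² − ν²) / ((2n + N + ν)(2n + N + ν + 2)) ), and c_n = −n(n + ν) / ((2n + N + ν)(2n + N + ν + 1)). -/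

import Mathlib

open Real MeasureTheory

/-- Pochhammer symbol `(a)_k = a (a+1) ⋯ (a+k-1)`. -/
noncomputable def poch (a : ℝ) (k : ℕ) : ℝ := ∏ i ∈ Finset.range k, (a + i)

/-- Bessel function of the first kind of real order `μ`, via its defining series. -/
noncomputable def besselJ (μ x : ℝ) : ℝ :=
  ∑' k : ℕ, (-1) ^ k / (k.factorial * Real.Gamma (μ + k + 1)) * (x / 2) ^ (2 * (k : ℝ) + μ)

/-- Jacobi polynomial `P_n^{(α,β)}(x)` via its hypergeometric series. -/
noncomputable def jacobiP (α β : ℝ) (n : ℕ) (x : ℝ) : ℝ :=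
  poch (α + 1) n / n.factorial *
    ∑ k ∈ Finset.range (n + 1),
      poch (-(n : ℝ)) k * poch ((n : ℝ) + α + β + 1) k / (poch (α + 1) k * k.factorial) *
        ((1 - x) / 2) ^ k

/-- `T^ν_{N,n}(x) = x^{N+1/2} (N! n!/(N+n)!) P_n^{(N,ν)}(1-2x²)`. -/
noncomputable def Tfun (ν : ℝ) (N n : ℕ) (x : ℝ) : ℝ :=
  x ^ ((N : ℝ) + 1 / 2) * ((N.factorial * n.factorial : ℝ) / (N + n).factorial) *
    jacobiP N ν n (1 - 2 * x ^ 2)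


lemma poch_succ (a : ℝ) (k : ℕ) : poch a (k+1) = poch a k * (a + k) :=
  Finset.prod_range_succ _ _

lemma poch_add_one (a : ℝ) (k : ℕ) : poch a (k+1) = a * poch (a+1) k := by
  rw [poch, Finset.prod_range_succ', poch, Nat.cast_zero, add_zero, mul_comm]
  congr 1
  refine Finset.prod_congr rfl fun i _ => ?_
  push_cast; ring

lemma poch_pos {a : ℝ} (ha : 0 < a) (k : ℕ) : 0 < poch a k :=
  Finset.prod_pos (fun i _ => by positivity)

lemma poch_neg_nat_ne_zero {m k : ℕ} (h : k ≤ m) : poch (-(m:ℝ)) k ≠ 0 := by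
  rw [poch, Finset.prod_ne_zero_iff]
  intro i hi hzero
  have h1 : (i:ℝ) < m := by
    exact_mod_cast lt_of_lt_of_le (Finset.mem_range.1 hi) h
  linarith

noncomputable def tc (ν : ℝ) (N m k : ℕ) : ℝ :=
  poch (-(m:ℝ)) k * poch ((m:ℝ) + N + ν + 1) k / (poch ((N:ℝ)+1) k * k.factorial)

lemma div_ext {n d c D : ℝ} (hc : c ≠ 0) (hD : D = d * c) : n / d = n * c / D := by
  rw [hD, mul_div_mul_right _ _ hc]

set_option maxHeartbeats 1000000 in
lemma ratkey (M K J ν : ℝ)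
    (dNj : K+1+J ≠ 0) (dj : J+1 ≠ 0) (dW : M+K+ν+2 ≠ 0) (dm : M+1 ≠ 0)
    (d1 : 2*(M+1) + K + ν ≠ 0) (d2 : 2*(M+1) + K + ν + 1 ≠ 0)
    (d3 : 2*(M+1) + K + ν + 2 ≠ 0) :
    (1:ℝ)
      = (-(((M+1) + K + 1) * ((M+1) + K + ν + 1) /
            ((2*(M+1) + K + ν + 1) * (2*(M+1) + K + ν + 2))))
          * ((-(M+2)) * ((M+K+ν+2 + J) * (M+K+ν+3 + J))
              / ((M+K+ν+2) * ((K+1+J) * (J+1))))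
        + ((1/2) * (1 + (K^2 - ν^2) /
            ((2*(M+1) + K + ν) * (2*(M+1) + K + ν + 2))))
          * ((-(M+1) + J) * (M+K+ν+2 + J) / ((K+1+J) * (J+1)))
        + (-((M+1) * ((M+1) + ν) /
            ((2*(M+1) + K + ν) * (2*(M+1) + K + ν + 1))))
          * ((-(M+1) + J) * (-(M+1) + J + 1) * (M+K+ν+1)
              / ((-(M+1)) * ((K+1+J) * (J+1)))) := by
  have hC2 : (1:ℝ)/2 * (1 + (K^2 - ν^2) /
        ((2*(M+1) + K + ν) * (2*(M+1) + K + ν + 2)))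
      = ((1/2) * ((2*(M+1) + K + ν) * (2*(M+1) + K + ν + 2) + (K^2 - ν^2)))
        / ((2*(M+1) + K + ν) * (2*(M+1) + K + ν + 2)) := by
    have h13 : (2*(M+1) + K + ν) * (2*(M+1) + K + ν + 2) ≠ 0 := mul_ne_zero d1 d3
    field_simp
  rw [hC2, ← neg_div, ← neg_div, div_mul_div_comm, div_mul_div_comm, div_mul_div_comm]
  rw [div_ext (n := -((M + 1 + K + 1) * (M + 1 + K + ν + 1)) * (-(M + 2) * ((M + K + ν + 2 + J) * (M + K + ν + 3 + J))))
      (c := (2*(M+1) + K + ν) * (M+1))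
      (D := (2*(M+1) + K + ν + 1) * (2*(M+1) + K + ν + 2) * ((M+K+ν+2) * ((K+1+J) * (J+1))) * ((2*(M+1) + K + ν) * (M+1)))
      (mul_ne_zero d1 dm) rfl]
  rw [div_ext (n := 1/2 * ((2*(M+1) + K + ν) * (2*(M+1) + K + ν + 2) + (K^2 - ν^2)) * ((-(M+1) + J) * (M+K+ν+2 + J)))
      (c := (2*(M+1) + K + ν + 1) * ((M+K+ν+2) * (M+1)))
      (D := (2*(M+1) + K + ν + 1) * (2*(M+1) + K + ν + 2) * ((M+K+ν+2) * ((K+1+J) * (J+1))) * ((2*(M+1) + K + ν) * (M+1)))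
      (mul_ne_zero d2 (mul_ne_zero dW dm)) (by ring)]
  rw [div_ext (n := -((M + 1) * (M + 1 + ν)) * ((-(M+1) + J) * (-(M+1) + J + 1) * (M+K+ν+1)))
      (c := -((2*(M+1) + K + ν + 2) * (M+K+ν+2)))
      (D := (2*(M+1) + K + ν + 1) * (2*(M+1) + K + ν + 2) * ((M+K+ν+2) * ((K+1+J) * (J+1))) * ((2*(M+1) + K + ν) * (M+1)))
      (neg_ne_zero.2 (mul_ne_zero d3 dW)) (by ring)]
  rw [← add_div, ← add_div, eq_comm, div_eq_one_iff_eq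
      (by exact mul_ne_zero (mul_ne_zero (mul_ne_zero d2 d3) (mul_ne_zero dW (mul_ne_zero dNj dj))) (mul_ne_zero d1 dm))]
  ring

set_option maxHeartbeats 2000000 in
lemma step (ν : ℝ) (hν : ν > -1) (N m j : ℕ) (hj : j ≤ m + 1) :
    tc ν N (m+1) j
      = (-(((((m:ℝ))+1) + N + 1) * ((((m:ℝ))+1) + N + ν + 1) /
            ((2*(((m:ℝ))+1) + N + ν + 1) * (2*(((m:ℝ))+1) + N + ν + 2)))) * tc ν N (m+2) (j+1)
        + ((1/2) * (1 + ((N:ℝ)^2 - ν^2) /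
            ((2*(((m:ℝ))+1) + N + ν) * (2*(((m:ℝ))+1) + N + ν + 2)))) * tc ν N (m+1) (j+1)
        + (-((((m:ℝ))+1) * ((((m:ℝ))+1) + ν) /
            ((2*(((m:ℝ))+1) + N + ν) * (2*(((m:ℝ))+1) + N + ν + 1)))) * tc ν N m (j+1) := by
  set A := poch (-((m:ℝ)+1)) j with hA
  set B := poch ((m:ℝ)+↑N+ν+2) j with hB
  set Q := poch ((N:ℝ)+1) j with hQ
  have hmcast : -((m:ℝ)+1) = -(((m+1:ℕ)):ℝ) := by push_cast; ring
  have hA0 : A ≠ 0 := by rw [hA, hmcast]; exact poch_neg_nat_ne_zero hj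
  have h0 : (0:ℝ) ≤ m := Nat.cast_nonneg m
  have h0N : (0:ℝ) ≤ N := Nat.cast_nonneg N
  have h0j : (0:ℝ) ≤ j := Nat.cast_nonneg j
  have hW2 : (0:ℝ) < (m:ℝ)+↑N+ν+2 := by linarith
  have hB0 : (0:ℝ) < B := by rw [hB]; exact poch_pos hW2 j
  have hQ0 : (0:ℝ) < Q := by rw [hQ]; exact poch_pos (by positivity) j
  have hfac : ((j.factorial:ℝ)) ≠ 0 := by positivity
  have d1 : (2*((m:ℝ)+1) + N + ν) ≠ 0 := by intro h; nlinarith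
  have d2 : (2*((m:ℝ)+1) + N + ν + 1) ≠ 0 := by intro h; nlinarith
  have d3 : (2*((m:ℝ)+1) + N + ν + 2) ≠ 0 := by intro h; nlinarith
  have dm : ((m:ℝ)+1) ≠ 0 := by intro h; nlinarith
  have dm' : -((m:ℝ)+1) ≠ 0 := by intro h; nlinarith
  have dNj : ((N:ℝ)+1+j) ≠ 0 := by intro h; nlinarith
  have dj : ((j:ℝ)+1) ≠ 0 := by intro h; nlinarith
  have dW : ((m:ℝ)+↑N+ν+2) ≠ 0 := ne_of_gt hW2
  have c0 : tc ν N (m+1) j = A * B / (Q * j.factorial) := by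
    unfold tc
    rw [show (((m+1:ℕ)):ℝ) + ↑N + ν + 1 = (m:ℝ)+↑N+ν+2 by push_cast; ring, ← hmcast]
  have p1 : poch (-((m:ℝ)+1)) (j+1) = A * (-((m:ℝ)+1) + j) := poch_succ _ _
  have p2 : poch ((m:ℝ)+↑N+ν+2) (j+1) = B * ((m:ℝ)+↑N+ν+2 + j) := poch_succ _ _
  have pQ : poch ((N:ℝ)+1) (j+1) = Q * ((N:ℝ)+1 + j) := poch_succ _ _
  have pfac : (((j+1).factorial:ℝ)) = (j.factorial:ℝ) * (j+1) := by
    rw [Nat.factorial_succ]; push_cast; ring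
  have c2 : tc ν N (m+1) (j+1)
      = ((-((m:ℝ)+1) + ↑j) * ((m:ℝ)+↑N+ν+2 + ↑j) / (((N:ℝ)+1+↑j) * ((j:ℝ)+1)))
        * (A * B / (Q * j.factorial)) := by
    unfold tc
    rw [show (((m+1:ℕ)):ℝ) + ↑N + ν + 1 = (m:ℝ)+↑N+ν+2 by push_cast; ring, ← hmcast,
      p1, p2, pQ, pfac]
    field_simp
  have q1 : poch (-((m:ℝ)+2)) (j+1) = (-((m:ℝ)+2)) * A := by
    rw [poch_add_one, show -((m:ℝ)+2)+1 = -((m:ℝ)+1) by ring]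
  have q2 : poch ((m:ℝ)+↑N+ν+3) (j+1)
      = B * ((m:ℝ)+↑N+ν+2 + j) * ((m:ℝ)+↑N+ν+3 + j) / ((m:ℝ)+↑N+ν+2) := by
    have e1 : poch ((m:ℝ)+↑N+ν+2) (j+2) = ((m:ℝ)+↑N+ν+2) * poch ((m:ℝ)+↑N+ν+3) (j+1) := by
      rw [poch_add_one, show (m:ℝ)+↑N+ν+2+1 = (m:ℝ)+↑N+ν+3 by ring]
    have e2 : poch ((m:ℝ)+↑N+ν+2) (j+2)
        = B * ((m:ℝ)+↑N+ν+2 + j) * ((m:ℝ)+↑N+ν+2 + ↑(j+1)) := by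
      rw [poch_succ, poch_succ, ← hB]
    rw [e2] at e1
    push_cast at e1
    rw [eq_div_iff (ne_of_gt hW2)]
    linear_combination -e1
  have c1 : tc ν N (m+2) (j+1)
      = ((-((m:ℝ)+2)) * (((m:ℝ)+↑N+ν+2 + ↑j) * ((m:ℝ)+↑N+ν+3 + ↑j))
          / (((m:ℝ)+↑N+ν+2) * ((((N:ℝ))+1+↑j) * ((j:ℝ)+1))))
        * (A * B / (Q * j.factorial)) := by
    unfold tc
    rw [show (((m+2:ℕ)):ℝ) + ↑N + ν + 1 = (m:ℝ)+↑N+ν+3 by push_cast; ring,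
      show -(((m+2:ℕ)):ℝ) = -((m:ℝ)+2) by push_cast; ring, q1, q2, pQ, pfac]
    field_simp
  have r1 : poch (-((m:ℝ))) (j+1)
      = A * (-((m:ℝ)+1) + j) * (-((m:ℝ)+1) + j + 1) / (-((m:ℝ)+1)) := by
    have e1 : poch (-((m:ℝ)+1)) (j+2) = (-((m:ℝ)+1)) * poch (-(m:ℝ)) (j+1) := by
      rw [poch_add_one, show -((m:ℝ)+1)+1 = -(m:ℝ) by ring]
    have e2 : poch (-((m:ℝ)+1)) (j+2)
        = A * (-((m:ℝ)+1) + j) * (-((m:ℝ)+1) + ↑(j+1)) := by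
      rw [poch_succ, poch_succ, ← hA]
    rw [e2] at e1
    push_cast at e1
    rw [eq_div_iff dm']
    linear_combination -e1
  have r2 : poch ((m:ℝ)+↑N+ν+1) (j+1) = ((m:ℝ)+↑N+ν+1) * B := by
    rw [poch_add_one, show (m:ℝ)+↑N+ν+1+1 = (m:ℝ)+↑N+ν+2 by ring, ← hB]
  have c3 : tc ν N m (j+1)
      = ((-((m:ℝ)+1) + ↑j) * (-((m:ℝ)+1) + ↑j + 1) * ((m:ℝ)+↑N+ν+1)
          / ((-((m:ℝ)+1)) * ((((N:ℝ))+1+↑j) * ((j:ℝ)+1))))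
        * (A * B / (Q * j.factorial)) := by
    unfold tc
    rw [r1, r2, pQ, pfac]
    field_simp
  have hs := ratkey (m:ℝ) (N:ℝ) (j:ℝ) ν dNj dj dW dm d1 d2 d3
  rw [c0, c1, c2, c3]
  linear_combination (A * B / (Q * (j.factorial:ℝ))) * hs

lemma poch_neg_nat_eq_zero {m k : ℕ} (h : m < k) : poch (-(m:ℝ)) k = 0 :=
  Finset.prod_eq_zero (Finset.mem_range.2 h) (by simp)

lemma poch_nat (N m : ℕ) : poch ((N:ℝ)+1) m * N.factorial = (N+m).factorial := by
  induction m with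
  | zero => simp [poch]
  | succ m ih =>
    rw [poch_succ, show N + (m+1) = (N+m)+1 by ring, Nat.factorial_succ]
    push_cast
    nlinarith [ih]

lemma tc_zero (ν : ℝ) (N m : ℕ) : tc ν N m 0 = 1 := by
  simp [tc, poch]

lemma tc_vanish (ν : ℝ) (N m k : ℕ) (h : m < k) : tc ν N m k = 0 := by
  unfold tc
  rw [poch_neg_nat_eq_zero h, zero_mul, zero_div]

lemma coeff0 (ν : ℝ) (hν : ν > -1) (N m : ℕ) :
    (-(((((m:ℝ))+1) + N + 1) * ((((m:ℝ))+1) + N + ν + 1) /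
            ((2*(((m:ℝ))+1) + N + ν + 1) * (2*(((m:ℝ))+1) + N + ν + 2))))
        + ((1/2) * (1 + ((N:ℝ)^2 - ν^2) /
            ((2*(((m:ℝ))+1) + N + ν) * (2*(((m:ℝ))+1) + N + ν + 2))))
        + (-((((m:ℝ))+1) * ((((m:ℝ))+1) + ν) /
            ((2*(((m:ℝ))+1) + N + ν) * (2*(((m:ℝ))+1) + N + ν + 1)))) = 0 := by
  have h0 : (0:ℝ) ≤ m := Nat.cast_nonneg m
  have h0N : (0:ℝ) ≤ N := Nat.cast_nonneg N
  have d1 : (2*((m:ℝ)+1) + N + ν) ≠ 0 := by intro h; nlinarith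
  have d2 : (2*((m:ℝ)+1) + N + ν + 1) ≠ 0 := by intro h; nlinarith
  have d3 : (2*((m:ℝ)+1) + N + ν + 2) ≠ 0 := by intro h; nlinarith
  have d1' : ((m:ℝ)+1)*2 + N + ν ≠ 0 := by rwa [mul_comm]
  have d2' : ((m:ℝ)+1)*2 + N + ν + 1 ≠ 0 := by rwa [mul_comm]
  have d3' : ((m:ℝ)+1)*2 + N + ν + 2 ≠ 0 := by rwa [mul_comm]
  field_simp
  ring

set_option maxHeartbeats 1000000 in
lemma key (ν : ℝ) (hν : ν > -1) (N m : ℕ) (z : ℝ) :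
    z * ∑ k ∈ Finset.range (m+2), tc ν N (m+1) k * z^k
      = (-(((((m:ℝ))+1) + N + 1) * ((((m:ℝ))+1) + N + ν + 1) /
            ((2*(((m:ℝ))+1) + N + ν + 1) * (2*(((m:ℝ))+1) + N + ν + 2))))
          * ∑ k ∈ Finset.range (m+3), tc ν N (m+2) k * z^k
        + ((1/2) * (1 + ((N:ℝ)^2 - ν^2) /
            ((2*(((m:ℝ))+1) + N + ν) * (2*(((m:ℝ))+1) + N + ν + 2))))
          * ∑ k ∈ Finset.range (m+2), tc ν N (m+1) k * z^k
        + (-((((m:ℝ))+1) * ((((m:ℝ))+1) + ν) /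
            ((2*(((m:ℝ))+1) + N + ν) * (2*(((m:ℝ))+1) + N + ν + 1))))
          * ∑ k ∈ Finset.range (m+1), tc ν N m k * z^k := by
  have ext2 : ∑ k ∈ Finset.range (m+3), tc ν N (m+1) k * z^k
      = ∑ k ∈ Finset.range (m+2), tc ν N (m+1) k * z^k := by
    rw [Finset.sum_range_succ, tc_vanish ν N (m+1) (m+2) (by omega), zero_mul, add_zero]
  have ext3 : ∑ k ∈ Finset.range (m+3), tc ν N m k * z^k
      = ∑ k ∈ Finset.range (m+1), tc ν N m k * z^k := by
    rw [Finset.sum_range_succ, Finset.sum_range_succ,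
      tc_vanish ν N m (m+2) (by omega), tc_vanish ν N m (m+1) (by omega)]
    ring
  rw [← ext2, ← ext3, Finset.mul_sum, Finset.mul_sum, Finset.mul_sum, Finset.mul_sum,
    ← Finset.sum_add_distrib, ← Finset.sum_add_distrib]
  rw [show m+3 = m+2+1 by omega]
  have splitR := Finset.sum_range_succ'
    (fun k => (-(((((m:ℝ))+1) + N + 1) * ((((m:ℝ))+1) + N + ν + 1) /
            ((2*(((m:ℝ))+1) + N + ν + 1) * (2*(((m:ℝ))+1) + N + ν + 2))))
          * (tc ν N (m+2) k * z^k)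
        + ((1/2) * (1 + ((N:ℝ)^2 - ν^2) /
            ((2*(((m:ℝ))+1) + N + ν) * (2*(((m:ℝ))+1) + N + ν + 2))))
          * (tc ν N (m+1) k * z^k)
        + (-((((m:ℝ))+1) * ((((m:ℝ))+1) + ν) /
            ((2*(((m:ℝ))+1) + N + ν) * (2*(((m:ℝ))+1) + N + ν + 1))))
          * (tc ν N m k * z^k)) (m+2)
  rw [splitR]
  have hD0 : (-(((((m:ℝ))+1) + N + 1) * ((((m:ℝ))+1) + N + ν + 1) /
            ((2*(((m:ℝ))+1) + N + ν + 1) * (2*(((m:ℝ))+1) + N + ν + 2))))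
          * (tc ν N (m+2) 0 * z^0)
        + ((1/2) * (1 + ((N:ℝ)^2 - ν^2) /
            ((2*(((m:ℝ))+1) + N + ν) * (2*(((m:ℝ))+1) + N + ν + 2))))
          * (tc ν N (m+1) 0 * z^0)
        + (-((((m:ℝ))+1) * ((((m:ℝ))+1) + ν) /
            ((2*(((m:ℝ))+1) + N + ν) * (2*(((m:ℝ))+1) + N + ν + 1))))
          * (tc ν N m 0 * z^0) = 0 := by
    simp only [tc_zero, pow_zero, mul_one]
    exact coeff0 ν hν N m
  rw [hD0, add_zero]
  rw [Finset.sum_range_succ, tc_vanish ν N (m+1) (m+2) (by omega), zero_mul, mul_zero, add_zero]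
  refine Finset.sum_congr rfl fun k hk => ?_
  have hk' : k ≤ m + 1 := by
    have := Finset.mem_range.1 hk; omega
  have hstep := step ν hν N m k hk'
  calc z * (tc ν N (m+1) k * z ^ k) = tc ν N (m+1) k * z ^ (k+1) := by
        rw [pow_succ]; ring
    _ = _ := by rw [hstep]; ring

lemma Tfun_eq (ν : ℝ) (N m : ℕ) (x : ℝ) :
    Tfun ν N m x
      = x ^ ((N:ℝ) + 1/2) * ∑ k ∈ Finset.range (m+1), tc ν N m k * (x^2)^k := by
  unfold Tfun jacobiP
  rw [show ((1:ℝ) - (1 - 2*x^2))/2 = x^2 by ring]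
  have hfN : (N.factorial:ℝ) ≠ 0 := by positivity
  have hfm : (m.factorial:ℝ) ≠ 0 := by positivity
  have hfNm : ((N+m).factorial:ℝ) ≠ 0 := by positivity
  have hp : poch ((N:ℝ)+1) m = ((N+m).factorial:ℝ) / N.factorial := by
    rw [eq_div_iff hfN]; exact poch_nat N m
  rw [hp]
  simp only [tc]
  field_simp

theorem Tfun_three_term_recurrence (ν : ℝ) (hν : ν > -1) (N : ℕ) (n : ℕ) (hn : 1 ≤ n)
    (x : ℝ) (hx : x > 0) :
    x ^ 2 * Tfun ν N n x
      = (-(((n : ℝ) + N + 1) * ((n : ℝ) + N + ν + 1) /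
            ((2 * n + N + ν + 1) * (2 * n + N + ν + 2)))) * Tfun ν N (n + 1) x
        + ((1 / 2) * (1 + ((N : ℝ) ^ 2 - ν ^ 2) /
            ((2 * n + N + ν) * (2 * n + N + ν + 2)))) * Tfun ν N n x
        + (-((n : ℝ) * ((n : ℝ) + ν) /
            ((2 * n + N + ν) * (2 * n + N + ν + 1)))) * Tfun ν N (n - 1) x := by
  obtain ⟨m, rfl⟩ : ∃ m, n = m + 1 := ⟨n - 1, by omega⟩
  simp only [Nat.add_sub_cancel]
  rw [Tfun_eq, Tfun_eq, Tfun_eq]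
  have hkey := key ν hν N m (x^2)
  push_cast
  linear_combination (x ^ ((N:ℝ) + 1/2)) * hkey
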